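/- Let q be a prime power and V an n-dimensional vector space over F_q. If M is a nonzero subspace of bilinear forms on V such that every nonzero element of M has rank exactly r (1 ≤ r ≤ n), then dim M ≤ 2n − r. -/

import Mathlib

open Finset Module
open scoped Classical

section helpers

variable (K : Type*) [Field K] [Fintype K]

lemma natCard_eq_pow_finrank (W : Type*) [AddCommGroup W] [Module K W] [Module.Finite K W] :
    Nat.card W = (Fintype.card K) ^ Module.finrank K W := by
  have : Finite W := Module.finite_of_finite K
  cases nonempty_fintype W
  rw [Nat.card_eq_fintype_card, card_eq_pow_finrank (K := K)]

variable {K}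

lemma count_zeros {W U : Type*} [AddCommGroup W] [Module K W] [AddCommGroup U] [Module K U]
    [Fintype W] (φ : W →ₗ[K] U) [DecidablePred fun w => φ w = 0] :
    (Finset.univ.filter fun w => φ w = 0).card = Nat.card (LinearMap.ker φ) := by
  have h : Nat.card (LinearMap.ker φ) = Nat.card {w // φ w = 0} :=
    Nat.card_congr (Equiv.subtypeEquivRight fun w => LinearMap.mem_ker)
  rw [h, Nat.card_eq_fintype_card, Fintype.card_subtype]

lemma finrank_ker_functional {W : Type*} [AddCommGroup W] [Module K W] [FiniteDimensional K W]
    (g : W →ₗ[K] K) (hg : g ≠ 0) :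
    Module.finrank K (LinearMap.ker g) = Module.finrank K W - 1 := by
  have hsurj : Function.Surjective g := by
    obtain ⟨w, hw⟩ : ∃ w, g w ≠ 0 := by
      by_contra h
      push_neg at h
      exact hg (LinearMap.ext fun w => by simp [h w])
    intro c
    exact ⟨(c * (g w)⁻¹) • w, by simp [mul_assoc, inv_mul_cancel₀ hw]⟩
  have h1 : Module.finrank K (LinearMap.range g) = 1 := by
    rw [LinearMap.range_eq_top.mpr hsurj, finrank_top, Module.finrank_self]
  have h2 := LinearMap.finrank_range_add_finrank_ker g
  omega

lemma count_ne_zero_functional {W : Type*} [AddCommGroup W] [Module K W] [Fintype W]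
    [FiniteDimensional K W] (g : W →ₗ[K] K) (hg : g ≠ 0) :
    (Finset.univ.filter fun w => g w ≠ 0).card =
      (Fintype.card K) ^ (Module.finrank K W) - (Fintype.card K) ^ (Module.finrank K W - 1) := by
  have h0 : (Finset.univ.filter fun w => g w = 0).card
      = (Fintype.card K) ^ (Module.finrank K W - 1) := by
    rw [count_zeros, natCard_eq_pow_finrank K, finrank_ker_functional g hg]
  have hsplit : (Finset.univ.filter fun w => g w = 0).card
      + (Finset.univ.filter fun w => g w ≠ 0).card = Fintype.card W := by
    simpa using Finset.card_filter_add_card_filter_not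
      (s := (Finset.univ : Finset W)) (p := fun w => g w = 0)
  have hW : Fintype.card W = (Fintype.card K) ^ (Module.finrank K W) :=
    card_eq_pow_finrank (K := K)
  omega

end helpers

set_option maxHeartbeats 2000000 in
/-- a nonzero constant-rank-`r` subspace of bilinear forms on `F_q^n`
(`1 ≤ r ≤ n`) has dimension at most `2n − r`. -/
theorem stmt6 (q n r : ℕ) (K : Type*) [Field K] [Fintype K]
    (hq : Fintype.card K = q) (hr1 : 1 ≤ r) (hrn : r ≤ n)
    (M : Submodule K ((Fin n → K) →ₗ[K] (Fin n → K) →ₗ[K] K)) (hM : M ≠ ⊥)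
    (hrank : ∀ f ∈ M, f ≠ 0 → n - Module.finrank K (LinearMap.ker f) = r) :
    Module.finrank K ↥M ≤ 2 * n - r := by
  classical
  subst hq
  set q := Fintype.card K with hqdef
  have hq2 : 2 ≤ q := Fintype.one_lt_card
  have hVn : Module.finrank K (Fin n → K) = n := Module.finrank_fin_fun K
  have hn1 : 1 ≤ n := le_trans hr1 hrn
  have hfinM : Finite ↥M := Module.finite_of_finite K
  cases nonempty_fintype ↥M
  letI : AddCommGroup ↥M := @Submodule.addCommGroup K ((Fin n → K) →ₗ[K] (Fin n → K) →ₗ[K] K) _ inferInstance _ M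
  set d := Module.finrank K ↥M with hddef
  obtain ⟨f₀, hf₀M, hf₀⟩ := Submodule.exists_mem_ne_zero_of_ne_bot hM
  have hd : 1 ≤ d := by
    rw [hddef, Nat.one_le_iff_ne_zero, ← Nat.pos_iff_ne_zero]
    exact Module.finrank_pos_iff.mpr
      (nontrivial_of_ne ⟨f₀, hf₀M⟩ 0 fun h => hf₀ (by simpa [Submodule.mk_eq_zero] using h))
  have hcardM : Fintype.card ↥M = q ^ d := by
    rw [Module.card_eq_pow_finrank (K := K), ← hddef, ← hqdef]
  have hcardV : Fintype.card (Fin n → K) = q ^ n := by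
    rw [card_eq_pow_finrank (K := K), hVn, ← hqdef]
  -- the evaluation functionals on M
  set Φ : (Fin n → K) × (Fin n → K) → (↥M →ₗ[K] K) := fun uv =>
    (LinearMap.applyₗ uv.2).comp ((LinearMap.applyₗ uv.1).comp M.subtype) with hΦ
  set c2 := ((univ : Finset ((Fin n → K) × (Fin n → K))).filter fun uv => ¬ (Φ uv = 0)).card
    with hc2
  -- count, for a fixed nonzero f ∈ M, the pairs where f doesn't vanish
  have hL : ∀ f : ↥M, (f : (Fin n → K) →ₗ[K] (Fin n → K) →ₗ[K] K) ≠ 0 →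
      ((univ : Finset ((Fin n → K) × (Fin n → K))).filter
        fun uv => (f : (Fin n → K) →ₗ[K] (Fin n → K) →ₗ[K] K) uv.1 uv.2 ≠ 0).card
      = (q^n - q^(n-r)) * (q^n - q^(n-1)) := by
    intro f hf
    have hkerf : Module.finrank K
        (LinearMap.ker (f : (Fin n → K) →ₗ[K] (Fin n → K) →ₗ[K] K)) = n - r := by
      have h1 := hrank (f : (Fin n → K) →ₗ[K] (Fin n → K) →ₗ[K] K) f.2 hf
      have h2 : Module.finrank K
          (LinearMap.ker (f : (Fin n → K) →ₗ[K] (Fin n → K) →ₗ[K] K)) ≤ n := by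
        conv_rhs => rw [← hVn]
        exact Submodule.finrank_le _
      omega
    rw [Finset.card_filter]
    rw [Fintype.sum_prod_type]
    have hinner : ∀ u, (∑ v : Fin n → K,
        if (f : (Fin n → K) →ₗ[K] (Fin n → K) →ₗ[K] K) u v ≠ 0 then 1 else 0)
        = if (f : (Fin n → K) →ₗ[K] (Fin n → K) →ₗ[K] K) u = 0 then 0
          else (q^n - q^(n-1)) := by
      intro u
      split_ifs with h
      · simp [h]
      · rw [← Finset.card_filter, count_ne_zero_functional _ h, hVn, ← hqdef]
    rw [Finset.sum_congr rfl fun u _ => hinner u]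
    rw [Finset.sum_ite, Finset.sum_const, Finset.sum_const, smul_eq_mul, smul_eq_mul,
      mul_zero, zero_add]
    congr 1
    have hz : ((univ : Finset (Fin n → K)).filter
        fun u => (f : (Fin n → K) →ₗ[K] (Fin n → K) →ₗ[K] K) u = 0).card = q^(n-r) := by
      have hcz := count_zeros (K := K) (W := Fin n → K)
        (U := (Fin n → K) →ₗ[K] K) (f : (Fin n → K) →ₗ[K] (Fin n → K) →ₗ[K] K)
      rw [natCard_eq_pow_finrank K, hkerf, ← hqdef] at hcz
      convert hcz using 2
    have hsp := Finset.card_filter_add_card_filter_not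
      (s := (univ : Finset (Fin n → K)))
      (p := fun u => (f : (Fin n → K) →ₗ[K] (Fin n → K) →ₗ[K] K) u = 0)
    simp only [Finset.card_univ, hcardV] at hsp
    omega
  -- total count, first way
  have hT : ∑ f : ↥M, ((univ : Finset ((Fin n → K) × (Fin n → K))).filter
        fun uv => (f : (Fin n → K) →ₗ[K] (Fin n → K) →ₗ[K] K) uv.1 uv.2 ≠ 0).card
      = (q^d - 1) * ((q^n - q^(n-r)) * (q^n - q^(n-1))) := by
    have h1 : ∀ f : ↥M, ((univ : Finset ((Fin n → K) × (Fin n → K))).filter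
        fun uv => (f : (Fin n → K) →ₗ[K] (Fin n → K) →ₗ[K] K) uv.1 uv.2 ≠ 0).card
        = if (f : (Fin n → K) →ₗ[K] (Fin n → K) →ₗ[K] K) = 0 then 0
          else (q^n - q^(n-r)) * (q^n - q^(n-1)) := by
      intro f
      split_ifs with h
      · simp only [h, LinearMap.zero_apply, ne_eq, not_true_eq_false,
          Finset.filter_false, Finset.card_empty]
      · exact hL f h
    rw [Finset.sum_congr rfl fun f _ => h1 f]
    rw [Finset.sum_ite, Finset.sum_const, Finset.sum_const, smul_eq_mul, smul_eq_mul,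
      mul_zero, zero_add]
    congr 1
    have h0 : ((univ : Finset ↥M).filter
        fun f : ↥M => (f : (Fin n → K) →ₗ[K] (Fin n → K) →ₗ[K] K) = 0).card = 1 := by
      rw [Finset.card_eq_one]
      refine ⟨0, ?_⟩
      rw [Finset.eq_singleton_iff_unique_mem]
      refine ⟨by simp, fun x hx => ?_⟩
      simp only [Finset.mem_filter, Finset.mem_univ, true_and, Submodule.coe_eq_zero] at hx
      exact hx
    have hsp := Finset.card_filter_add_card_filter_not
      (s := (univ : Finset ↥M))
      (p := fun f : ↥M => (f : (Fin n → K) →ₗ[K] (Fin n → K) →ₗ[K] K) = 0)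
    simp only [Finset.card_univ, hcardM] at hsp
    omega
  -- total count, second way
  have hT2 : ∑ f : ↥M, ((univ : Finset ((Fin n → K) × (Fin n → K))).filter
        fun uv => (f : (Fin n → K) →ₗ[K] (Fin n → K) →ₗ[K] K) uv.1 uv.2 ≠ 0).card
      = c2 * (q^d - q^(d-1)) := by
    have hswap : ∑ f : ↥M, ((univ : Finset ((Fin n → K) × (Fin n → K))).filter
          fun uv => (f : (Fin n → K) →ₗ[K] (Fin n → K) →ₗ[K] K) uv.1 uv.2 ≠ 0).card
        = ∑ uv : (Fin n → K) × (Fin n → K), ((univ : Finset ↥M).filter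
          fun f : ↥M => (f : (Fin n → K) →ₗ[K] (Fin n → K) →ₗ[K] K) uv.1 uv.2 ≠ 0).card := by
      simp only [Finset.card_filter]
      exact Finset.sum_comm (s := (univ : Finset ↥M))
        (t := (univ : Finset ((Fin n → K) × (Fin n → K))))
        (f := fun (f : ↥M) (uv : (Fin n → K) × (Fin n → K)) =>
          if (f : (Fin n → K) →ₗ[K] (Fin n → K) →ₗ[K] K) uv.1 uv.2 ≠ 0 then 1 else 0)
    rw [hswap]
    have h1 : ∀ uv : (Fin n → K) × (Fin n → K), ((univ : Finset ↥M).filter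
        fun f : ↥M => (f : (Fin n → K) →ₗ[K] (Fin n → K) →ₗ[K] K) uv.1 uv.2 ≠ 0).card
        = if Φ uv = 0 then 0 else q^d - q^(d-1) := by
      intro uv
      have hfe : ((univ : Finset ↥M).filter
          fun f : ↥M => (f : (Fin n → K) →ₗ[K] (Fin n → K) →ₗ[K] K) uv.1 uv.2 ≠ 0)
          = ((univ : Finset ↥M).filter fun f => Φ uv f ≠ 0) :=
        Finset.filter_congr fun f _ => Iff.rfl
      rw [hfe]
      split_ifs with h
      · simp only [h, LinearMap.zero_apply, ne_eq, not_true_eq_false,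
          Finset.filter_false, Finset.card_empty]
      · have hce := count_ne_zero_functional (W := ↥M) (K := K) (Φ uv) (by exact h)
        rw [← hqdef, ← hddef] at hce
        convert hce using 2
    rw [Finset.sum_congr rfl fun uv _ => h1 uv]
    rw [Finset.sum_ite, Finset.sum_const, Finset.sum_const, smul_eq_mul, smul_eq_mul,
      mul_zero, zero_add]
  -- main identity
  have E : (q^d - 1) * ((q^n - q^(n-r)) * (q^n - q^(n-1))) = c2 * (q^d - q^(d-1)) :=
    hT.symm.trans hT2
  -- final arithmetic
  by_contra hcon
  push_neg at hcon
  set e := d - (2*n - r) with hedef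
  have he : 1 ≤ e := by omega
  have hA : q^(n-r) ≤ q^n := Nat.pow_le_pow_right (by omega) (by omega)
  have hB : q^(n-1) ≤ q^n := Nat.pow_le_pow_right (by omega) (by omega)
  have hC : q^(d-1) ≤ q^d := Nat.pow_le_pow_right (by omega) (by omega)
  have hD : 1 ≤ q^d := Nat.one_le_pow _ _ (by omega)
  zify [hA, hB, hC, hD] at E
  have h0Q : (0:ℤ) < (q:ℤ) := by exact_mod_cast Nat.lt_of_lt_of_le Nat.zero_lt_two hq2
  have h2Q : (2:ℤ) ≤ (q:ℤ) := by exact_mod_cast hq2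
  have F1 : ((q:ℤ)^n - (q:ℤ)^(n-r)) = (q:ℤ)^(n-r) * ((q:ℤ)^r - 1) := by
    have h : (n-r) + r = n := by omega
    rw [mul_sub, ← pow_add, h, mul_one]
  have F2 : ((q:ℤ)^n - (q:ℤ)^(n-1)) = (q:ℤ)^(n-1) * ((q:ℤ) - 1) := by
    have h : (n-1) + 1 = n := by omega
    rw [mul_sub, ← pow_succ, h, mul_one]
  have F3 : ((q:ℤ)^d - (q:ℤ)^(d-1)) = (q:ℤ)^(d-1) * ((q:ℤ) - 1) := by
    have h : (d-1) + 1 = d := by omega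
    rw [mul_sub, ← pow_succ, h, mul_one]
  have F4 : ((q:ℤ)^(d-1)) = (q:ℤ)^(n-r) * (q:ℤ)^(n-1) * (q:ℤ)^e := by
    rw [← pow_add, ← pow_add]
    congr 1
    omega
  have F5 : ((q:ℤ)^d) = (q:ℤ)^(d-1) * (q:ℤ) := by
    have h : (d-1) + 1 = d := by omega
    rw [← pow_succ, h]
  rw [F1, F2, F3, F4] at E
  have key : ((q:ℤ)^d - 1) * ((q:ℤ)^r - 1) = (c2 : ℤ) * (q:ℤ)^e := by
    have hfac : ((q:ℤ)^(n-r) * (q:ℤ)^(n-1) * ((q:ℤ) - 1)) ≠ 0 :=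
      ne_of_gt (mul_pos (mul_pos (pow_pos h0Q _) (pow_pos h0Q _)) (by linarith))
    apply mul_right_cancel₀ hfac
    linear_combination E
  have hpow : (q:ℤ)^(d+r) = (q:ℤ)^d * (q:ℤ)^r := pow_add _ d r
  have h1 : (1:ℤ) = (c2:ℤ) * (q:ℤ)^e - (q:ℤ)^(d+r) + (q:ℤ)^d + (q:ℤ)^r := by
    linear_combination key + hpow
  have hdvd : (q:ℤ) ∣ 1 := by
    rw [h1]
    exact dvd_add (dvd_add (dvd_sub (Dvd.dvd.mul_left (dvd_pow_self _ (by omega : e ≠ 0)) _)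
      (dvd_pow_self _ (by omega : d + r ≠ 0))) (dvd_pow_self _ (by omega : d ≠ 0)))
      (dvd_pow_self _ (by omega : r ≠ 0))
  have := Int.le_of_dvd one_pos hdvd
  linarith
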